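/- Let Z be an integrable ℝ^q-valued random vector with a radial distribution, i.e. OZ has the same law as Z for every orthogonal q×q matrix O, and let A, B ∈ M_{d,q}(ℝ). If AA* ≤ BB* in the Loewner order (i.e. BB* − AA* is positive semidefinite), then AZ ≤_cvx BZ. Conversely, if in addition 0 < E|Z|² < ∞, then AZ ≤_cvx BZ implies AA* ≤ BB*. -/

import Mathlib

open MeasureTheory ProbabilityTheory
open scoped ENNReal
open scoped Matrix RealInnerProductSpace

noncomputable section

abbrev Euc (d : ℕ) : Type := EuclideanSpace ℝ (Fin d)

/-- Convex order `X ≤_cvx Y` between random vectors (tested on convex functions with linear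
growth). -/
def cvxLE {Ω F : Type*} [MeasurableSpace Ω] [NormedAddCommGroup F] [NormedSpace ℝ F]
    (P : Measure Ω) (X Y : Ω → F) : Prop :=
  ∀ φ : F → ℝ, ConvexOn ℝ Set.univ φ → (∃ C : ℝ, ∀ x, |φ x| ≤ C * (1 + ‖x‖)) →
    ∫ ω, φ (X ω) ∂P ≤ ∫ ω, φ (Y ω) ∂P

/-- Action of a `d×q` matrix on a vector of `ℝ^q`. -/
def matVec {d q : ℕ} (A : Matrix (Fin d) (Fin q) ℝ) (z : Euc q) : Euc d :=
  WithLp.toLp 2 (fun i => ∑ j, A i j * z j)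

variable {d q r : ℕ}

lemma matVec_eq (A : Matrix (Fin d) (Fin q) ℝ) (z : Euc q) :
    matVec A z = (A.mulVec (z : Fin q → ℝ) : Fin d → ℝ) := rfl

lemma matVec_matVec (A : Matrix (Fin d) (Fin q) ℝ) (B : Matrix (Fin q) (Fin r) ℝ) (z : Euc r) :
    matVec A (matVec B z) = matVec (A * B) z := by
  apply WithLp.ofLp_injective 2
  simp [matVec_eq, Matrix.mulVec_mulVec]

def matVecL (A : Matrix (Fin d) (Fin q) ℝ) : Euc q →L[ℝ] Euc d :=
  LinearMap.toContinuousLinearMap (Matrix.toEuclideanLin A)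

lemma matVecL_apply (A : Matrix (Fin d) (Fin q) ℝ) (z : Euc q) :
    matVecL A z = matVec A z := by
  show Matrix.toEuclideanLin A z = _
  rw [Matrix.toEuclideanLin_apply]
  rfl

lemma matVec_cont (A : Matrix (Fin d) (Fin q) ℝ) : Continuous (matVec A) := by
  have : matVec A = matVecL A := by ext1 z; rw [matVecL_apply]
  rw [this]; exact (matVecL A).continuous

lemma matVec_norm_le (A : Matrix (Fin d) (Fin q) ℝ) (z : Euc q) :
    ‖matVec A z‖ ≤ ‖matVecL A‖ * ‖z‖ := by
  rw [← matVecL_apply]; exact (matVecL A).le_opNorm z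

lemma real_inner_eq_dot (x y : Euc q) : ⟪x, y⟫ = (x : Fin q → ℝ) ⬝ᵥ (y : Fin q → ℝ) := by
  simp [PiLp.inner_apply, dotProduct, RCLike.inner_apply, mul_comm]

lemma dot_MMt (M : Matrix (Fin d) (Fin q) ℝ) (x : Fin d → ℝ) :
    x ⬝ᵥ ((M * M.transpose) *ᵥ x) = ‖matVec M.transpose (WithLp.toLp 2 x : Euc d)‖ ^ 2 := by
  rw [← real_inner_self_eq_norm_sq, real_inner_eq_dot, matVec_eq, WithLp.ofLp_toLp]
  rw [← Matrix.mulVec_mulVec, Matrix.dotProduct_mulVec, ← Matrix.mulVec_transpose]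

lemma matVec_sum {ι : Type*} (s : Finset ι) (f : ι → Matrix (Fin d) (Fin q) ℝ) (z : Euc q) :
    matVec (∑ i ∈ s, f i) z = ∑ i ∈ s, matVec (f i) z := by
  have h : ∀ (M : Matrix (Fin d) (Fin q) ℝ), matVec M z = Matrix.toEuclideanLin M z := by
    intro M; rw [← matVecL_apply]; rfl
  rw [h, map_sum, LinearMap.sum_apply]
  exact Finset.sum_congr rfl fun i _ => (h (f i)).symm

lemma matVec_smul (c : ℝ) (A : Matrix (Fin d) (Fin q) ℝ) (z : Euc q) :
    matVec (c • A) z = c • matVec A z := by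
  have h : ∀ (M : Matrix (Fin d) (Fin q) ℝ), matVec M z = Matrix.toEuclideanLin M z := by
    intro M; rw [← matVecL_apply]; rfl
  rw [h, _root_.map_smul, LinearMap.smul_apply, h]

lemma norm_matVec_orth (O : Matrix (Fin q) (Fin q) ℝ) (hO : O.transpose * O = 1) (z : Euc q) :
    ‖matVec O z‖ = ‖z‖ := by
  have h2 : ‖matVec O z‖ ^ 2 = ‖z‖ ^ 2 := by
    rw [← real_inner_self_eq_norm_sq, ← real_inner_self_eq_norm_sq, real_inner_eq_dot,
      real_inner_eq_dot, matVec_eq]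
    rw [Matrix.dotProduct_mulVec, ← Matrix.mulVec_transpose, Matrix.mulVec_mulVec, hO,
      Matrix.one_mulVec]
  have := congrArg Real.sqrt h2
  simpa [Real.sqrt_sq, norm_nonneg] using this

lemma inner_matVec (A : Matrix (Fin d) (Fin q) ℝ) (v : Euc d) (z : Euc q) :
    ⟪v, matVec A z⟫ = ⟪(matVec A.transpose v : Euc q), z⟫ := by
  rw [real_inner_eq_dot, real_inner_eq_dot, matVec_eq, matVec_eq,
    Matrix.dotProduct_mulVec, ← Matrix.mulVec_transpose]

lemma toEuclideanLin_matVec {m n : ℕ} (M : Matrix (Fin m) (Fin n) ℝ) (x : Euc n) :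
    Matrix.toEuclideanLin M x = matVec M x := by
  rw [← matVecL_apply]; rfl

lemma sqrt_mono_of_sq {a b : ℝ} (ha : 0 ≤ a) (hb : 0 ≤ b) (h : a ^ 2 ≤ b ^ 2) : a ≤ b := by
  nlinarith

lemma douglas (A B : Matrix (Fin d) (Fin q) ℝ)
    (hpsd : Matrix.PosSemidef (B * B.transpose - A * A.transpose)) :
    ∃ K : Matrix (Fin q) (Fin q) ℝ, A = B * K ∧ ∀ x : Euc q, ‖matVec K x‖ ≤ ‖x‖ := by
  classical
  set f : Euc d →ₗ[ℝ] Euc q := Matrix.toEuclideanLin A.transpose with hf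
  set g : Euc d →ₗ[ℝ] Euc q := Matrix.toEuclideanLin B.transpose with hg
  have happ : ∀ (M : Matrix (Fin q) (Fin d) ℝ) (x : Euc d),
      Matrix.toEuclideanLin M x = matVec M x := by
    intro M x; rw [← matVecL_apply]; rfl
  have hfg : ∀ x : Euc d, ‖f x‖ ≤ ‖g x‖ := by
    intro x
    refine sqrt_mono_of_sq (norm_nonneg _) (norm_nonneg _) ?_
    rw [hf, hg, happ, happ, ← WithLp.toLp_ofLp (x := x), ← dot_MMt A, ← dot_MMt B]
    have := hpsd.dotProduct_mulVec_nonneg x.ofLp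
    rw [Matrix.sub_mulVec, dotProduct_sub] at this
    simpa using sub_nonneg.mp (by simpa using this)
  -- kernel inclusion consequence
  have hker : ∀ x : Euc d, g x = 0 → f x = 0 := by
    intro x hx
    have := hfg x
    rw [hx, norm_zero] at this
    exact norm_eq_zero.mp (le_antisymm this (norm_nonneg _))
  set R : Submodule ℝ (Euc q) := LinearMap.range g with hR
  obtain ⟨s, hs⟩ := LinearMap.exists_rightInverse_of_surjective
    (f := g.rangeRestrict) (LinearMap.range_rangeRestrict g)
  have hsg : ∀ y : R, g (s y) = (y : Euc q) := by
    intro y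
    have : g.rangeRestrict (s y) = y := by
      have := congrArg (fun h => h y) hs
      exact LinearMap.congr_fun hs y
    simpa [LinearMap.rangeRestrict] using congrArg Subtype.val this
  set L : Euc q →ₗ[ℝ] Euc q :=
    (f.comp s).comp ((Submodule.orthogonalProjection R : Euc q →ₗ[ℝ] R)) with hL
  have hLg : ∀ x : Euc d, L (g x) = f x := by
    intro x
    have hmem : g x ∈ R := LinearMap.mem_range_self g x
    have hproj : (Submodule.orthogonalProjection R (g x) : R) = ⟨g x, hmem⟩ := by
      exact Submodule.orthogonalProjection_mem_subspace_eq_self (⟨g x, hmem⟩ : R)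
    show f (s (Submodule.orthogonalProjection R (g x))) = f x
    rw [hproj]
    have hgs : g (s ⟨g x, hmem⟩) = g x := hsg _
    have : f (s ⟨g x, hmem⟩ - x) = 0 := hker _ (by rw [map_sub, hgs, sub_self])
    rw [map_sub] at this
    exact sub_eq_zero.mp this
  have hLnorm : ∀ x : Euc q, ‖L x‖ ≤ ‖x‖ := by
    intro x
    show ‖f (s (Submodule.orthogonalProjection R x))‖ ≤ ‖x‖
    calc ‖f (s (Submodule.orthogonalProjection R x))‖ ≤ ‖g (s (Submodule.orthogonalProjection R x))‖ := hfg _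
      _ = ‖(Submodule.orthogonalProjection R x : Euc q)‖ := by rw [hsg]
      _ ≤ 1 * ‖x‖ := by
          simpa using (Submodule.orthogonalProjection R).le_of_opNorm_le (Submodule.orthogonalProjection_norm_le R) x
      _ = ‖x‖ := one_mul _
  -- matrix of L
  set ML : Matrix (Fin q) (Fin q) ℝ := Matrix.toEuclideanLin.symm L with hML
  have hMLL : Matrix.toEuclideanLin ML = L := Matrix.toEuclideanLin.apply_symm_apply L
  have hMLB : ML * B.transpose = A.transpose := by
    apply Matrix.toEuclideanLin.injective
    apply LinearMap.ext
    intro x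
    have h1 : Matrix.toEuclideanLin (ML * B.transpose) x
        = Matrix.toEuclideanLin ML (Matrix.toEuclideanLin B.transpose x) := by
      rw [happ, happ]
      have : Matrix.toEuclideanLin ML (matVec B.transpose x) = matVec ML (matVec B.transpose x) := by
        exact toEuclideanLin_matVec ML _
      rw [this, matVec_matVec]
    rw [h1, hMLL, happ]
    rw [← happ]; exact hLg x
  refine ⟨ML.transpose, ?_, ?_⟩
  · have := congrArg Matrix.transpose hMLB
    simpa [Matrix.transpose_mul] using this.symm
  · -- contraction transfers to transpose
    intro x
    have hMLc : ∀ y : Euc q, ‖matVec ML y‖ ≤ ‖y‖ := by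
      intro y
      have : matVec ML y = L y := by rw [← toEuclideanLin_matVec, hMLL]
      rw [this]; exact hLnorm y
    by_cases h0 : ‖matVec ML.transpose x‖ = 0
    · rw [h0]; exact norm_nonneg x
    · have hsq : ‖matVec ML.transpose x‖ ^ 2 ≤ ‖x‖ * ‖matVec ML.transpose x‖ := by
        have h1 : ‖matVec ML.transpose x‖ ^ 2
            = ⟪x, matVec ML (matVec ML.transpose x)⟫ := by
          rw [← real_inner_self_eq_norm_sq]
          exact (inner_matVec ML x _).symm
        rw [h1]
        calc ⟪x, matVec ML (matVec ML.transpose x)⟫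
            ≤ ‖x‖ * ‖matVec ML (matVec ML.transpose x)‖ := real_inner_le_norm _ _
          _ ≤ ‖x‖ * ‖matVec ML.transpose x‖ := by
              exact mul_le_mul_of_nonneg_left (hMLc _) (norm_nonneg x)
      have hpos : 0 < ‖matVec ML.transpose x‖ :=
        lt_of_le_of_ne (norm_nonneg _) (Ne.symm h0)
      nlinarith

lemma colMatrix_orth (b : OrthonormalBasis (Fin q) ℝ (Euc q)) :
    (Matrix.of fun i j => b j i).transpose * (Matrix.of fun i j => b j i) = 1 := by
  ext j k
  have horth := orthonormal_iff_ite.mp b.orthonormal j k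
  rw [real_inner_eq_dot] at horth
  simp only [Matrix.mul_apply, Matrix.transpose_apply, Matrix.of_apply, Matrix.one_apply]
  simpa [dotProduct] using horth

lemma contraction_decomp (K : Matrix (Fin q) (Fin q) ℝ)
    (hK : ∀ x : Euc q, ‖matVec K x‖ ≤ ‖x‖) :
    ∃ (w : (Fin q → Bool) → ℝ) (O : (Fin q → Bool) → Matrix (Fin q) (Fin q) ℝ),
      (∀ ε, 0 ≤ w ε) ∧ (∑ ε, w ε = 1) ∧ (∀ ε, O ε * (O ε).transpose = 1) ∧
      K = ∑ ε, w ε • O ε := by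
  classical
  have hH : (K.transpose * K).IsHermitian := by
    show (K.transpose * K).conjTranspose = _
    ext i j
    simp [Matrix.conjTranspose_apply, Matrix.mul_apply, mul_comm]
  set μ : Fin q → ℝ := hH.eigenvalues with hμdef
  set v : OrthonormalBasis (Fin q) ℝ (Euc q) := hH.eigenvectorBasis with hvdef
  have hvnorm : ∀ j, ‖(v j : Euc q)‖ = 1 := fun j => v.orthonormal.1 j
  have hKv : ∀ i j, ⟪(matVec K (v i) : Euc q), matVec K (v j)⟫
      = if i = j then μ j else 0 := by
    intro i j
    rw [real_inner_eq_dot, matVec_eq, matVec_eq]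
    rw [Matrix.dotProduct_mulVec, ← Matrix.mulVec_transpose, Matrix.mulVec_mulVec]
    have hme : (K.transpose * K) *ᵥ (v i : Fin q → ℝ) = μ i • (v i : Fin q → ℝ) :=
      hH.mulVec_eigenvectorBasis i
    rw [hme]
    have hvv := orthonormal_iff_ite.mp v.orthonormal i j
    rw [real_inner_eq_dot] at hvv
    rw [smul_dotProduct, hvv]
    by_cases h : i = j <;> simp [h]
  have hμsq : ∀ j, μ j = ‖(matVec K (v j) : Euc q)‖ ^ 2 := by
    intro j
    rw [← real_inner_self_eq_norm_sq, hKv j j, if_pos rfl]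
  have hμ0 : ∀ j, 0 ≤ μ j := fun j => (hμsq j) ▸ sq_nonneg _
  have hμ1 : ∀ j, μ j ≤ 1 := by
    intro j
    rw [hμsq j]
    have h1 := hK (v j)
    rw [hvnorm j] at h1
    nlinarith [norm_nonneg (matVec K (v j))]
  set σ : Fin q → ℝ := fun j => Real.sqrt (μ j) with hσdef
  have hσ0 : ∀ j, 0 ≤ σ j := fun j => Real.sqrt_nonneg _
  have hσ1 : ∀ j, σ j ≤ 1 := fun j => by
    rw [show (1:ℝ) = Real.sqrt 1 by simp]
    exact Real.sqrt_le_sqrt (hμ1 j)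
  have hσsq : ∀ j, σ j ^ 2 = μ j := fun j => Real.sq_sqrt (hμ0 j)
  -- the left singular family
  set sset : Set (Fin q) := {j | μ j ≠ 0} with hsset
  set wv : Fin q → Euc q := fun j => (σ j)⁻¹ • matVec K (v j) with hwv
  have hσne : ∀ j ∈ sset, σ j ≠ 0 := by
    intro j hj
    simp only [hsset, Set.mem_setOf_eq] at hj
    intro h0
    apply hj; rw [← hσsq j, h0]; ring
  have horth : Orthonormal ℝ (sset.restrict wv) := by
    rw [orthonormal_iff_ite]
    rintro ⟨i, hi⟩ ⟨j, hj⟩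
    show ⟪(σ i)⁻¹ • matVec K (v i), (σ j)⁻¹ • matVec K (v j)⟫ = _
    rw [real_inner_smul_left, real_inner_smul_right, hKv i j]
    by_cases h : i = j
    · subst h
      rw [if_pos rfl, if_pos rfl]
      have hne : σ i ≠ 0 := hσne i hi
      rw [← hσsq i]
      field_simp
    · rw [if_neg h, if_neg (by simpa [Subtype.ext_iff] using h)]
      ring
  have hcard : Module.finrank ℝ (Euc q) = Fintype.card (Fin q) := by
    simp [finrank_euclideanSpace]
  obtain ⟨b, hb⟩ := horth.exists_orthonormalBasis_extension_of_card_eq hcard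
  have hcol : ∀ j, σ j • (b j : Euc q) = matVec K (v j) := by
    intro j
    by_cases hj : μ j ≠ 0
    · rw [hb j hj, hwv]
      simp only [smul_smul]
      rw [mul_inv_cancel₀ (hσne j hj), one_smul]
    · push_neg at hj
      have h1 : σ j = 0 := by rw [hσdef]; simp [hj]
      have h2 : (matVec K (v j) : Euc q) = 0 := by
        have := hμsq j
        rw [hj] at this
        have := (sq_eq_zero_iff.mp this.symm)
        exact norm_eq_zero.mp this
      rw [h1, h2, zero_smul]
  set U : Matrix (Fin q) (Fin q) ℝ := Matrix.of fun i j => b j i with hU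
  set V : Matrix (Fin q) (Fin q) ℝ := Matrix.of fun i j => v j i with hV
  have hUo : U.transpose * U = 1 := colMatrix_orth b
  have hVo : V.transpose * V = 1 := colMatrix_orth v
  have hUo' : U * U.transpose = 1 := mul_eq_one_comm.mp hUo
  have hVo' : V * V.transpose = 1 := mul_eq_one_comm.mp hVo
  have hKV : K * V = U * Matrix.diagonal σ := by
    ext i j
    rw [Matrix.mul_apply, Matrix.mul_diagonal]
    have h1 : (matVec K (v j) : Euc q) i = ∑ k, K i k * v j k := rfl
    have h2 := congrFun (congrArg (fun (x : Euc q) => (x : Fin q → ℝ)) (hcol j)) i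
    simp only at h2
    have h3 : (σ j • (b j : Euc q)) i = σ j * b j i := rfl
    rw [h3] at h2
    calc ∑ k, K i k * V k j = matVec K (v j) i := rfl
      _ = σ j * b j i := h2.symm
      _ = U i j * σ j := by rw [mul_comm]; rfl
  have hKdecomp : K = U * Matrix.diagonal σ * V.transpose := by
    calc K = K * (V * V.transpose) := by rw [hVo', Matrix.mul_one]
      _ = (K * V) * V.transpose := by rw [Matrix.mul_assoc]
      _ = U * Matrix.diagonal σ * V.transpose := by rw [hKV]
  classical
  set fw : Fin q → Bool → ℝ := fun i bl => if bl then (1 + σ i)/2 else (1 - σ i)/2 with hfw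
  set w : (Fin q → Bool) → ℝ := fun ε => ∏ i, fw i (ε i) with hw
  set D : (Fin q → Bool) → Matrix (Fin q) (Fin q) ℝ :=
    fun ε => Matrix.diagonal (fun i => if ε i then (1:ℝ) else -1) with hD
  have hfw0 : ∀ i bl, 0 ≤ fw i bl := by
    intro i bl
    cases bl <;> simp [hfw] <;> [linarith [hσ1 i]; linarith [hσ0 i]]
  have hw0 : ∀ ε, 0 ≤ w ε := fun ε => Finset.prod_nonneg fun i _ => hfw0 i (ε i)
  have hwsum : ∑ ε, w ε = 1 := by
    rw [hw]
    have := Finset.prod_univ_sum (fun _ : Fin q => (Finset.univ : Finset Bool)) fw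
    rw [Fintype.piFinset_univ] at this
    rw [← this]
    have h1 : ∀ i : Fin q, ∑ bl : Bool, fw i bl = 1 := by
      intro i
      rw [Fintype.sum_bool]
      simp [hfw]
      ring
    simp only [h1, Finset.prod_const_one]
  have hDD : ∀ ε, D ε * D ε = 1 := by
    intro ε
    ext i j
    rw [hD]
    simp only [Matrix.diagonal_mul_diagonal]
    by_cases hij : i = j
    · subst hij
      rw [Matrix.diagonal_apply_eq, Matrix.one_apply_eq]
      cases h : ε i <;> norm_num
    · rw [Matrix.diagonal_apply_ne _ hij, Matrix.one_apply_ne hij]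
  have hdiag : Matrix.diagonal σ = ∑ ε, w ε • D ε := by
    ext i j
    rw [Matrix.sum_apply]
    by_cases hij : i = j
    · subst hij
      simp only [Matrix.diagonal_apply_eq, Matrix.smul_apply, hD, smul_eq_mul]
      set g : Fin q → Bool → ℝ :=
        fun k bl => fw k bl * (if k = i then (if bl then (1:ℝ) else -1) else 1) with hg
      have hper : ∀ ε : Fin q → Bool,
          w ε * (if ε i then (1:ℝ) else -1) = ∏ k, g k (ε k) := by
        intro ε
        rw [hw, hg]
        simp only
        rw [Finset.prod_mul_distrib]
        congr 1
        rw [Finset.prod_ite_eq' Finset.univ i (fun k => if ε k then (1:ℝ) else -1)]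
        simp
      calc σ i = ∏ k, (if k = i then σ k else 1) := by
            rw [Finset.prod_ite_eq' Finset.univ i (fun k => σ k)]; simp
        _ = ∏ k, ∑ bl : Bool, g k bl := by
            congr 1
            funext k
            rw [Fintype.sum_bool, hg]
            by_cases hk : k = i <;> simp [hk, hfw] <;> ring
        _ = ∑ ε : Fin q → Bool, ∏ k, g k (ε k) := by
            have := Finset.prod_univ_sum (fun _ : Fin q => (Finset.univ : Finset Bool)) g
            rw [Fintype.piFinset_univ] at this
            exact this
        _ = ∑ ε : Fin q → Bool, w ε * (if ε i then (1:ℝ) else -1) := by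
            exact Finset.sum_congr rfl fun ε _ => (hper ε).symm
    · simp only [Matrix.diagonal_apply_ne _ hij, Matrix.smul_apply, hD,
        Matrix.diagonal_apply_ne _ hij, smul_eq_mul, mul_zero, Finset.sum_const_zero]
  refine ⟨w, fun ε => U * D ε * V.transpose, hw0, hwsum, ?_, ?_⟩
  · intro ε
    have hDt : (D ε).transpose = D ε := by rw [hD]; exact Matrix.diagonal_transpose _
    rw [Matrix.transpose_mul, Matrix.transpose_mul, Matrix.transpose_transpose, hDt]
    show U * D ε * V.transpose * (V * (D ε * U.transpose)) = 1
    calc U * D ε * V.transpose * (V * (D ε * U.transpose))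
        = U * D ε * (V.transpose * V) * (D ε * U.transpose) := by
          rw [Matrix.mul_assoc (U * D ε), Matrix.mul_assoc (U * D ε), ← Matrix.mul_assoc V.transpose]
      _ = U * D ε * (D ε * U.transpose) := by rw [hVo, Matrix.mul_one]
      _ = U * (D ε * D ε) * U.transpose := by
          rw [Matrix.mul_assoc U (D ε) (D ε * U.transpose),
            ← Matrix.mul_assoc (D ε) (D ε) U.transpose,
            ← Matrix.mul_assoc U (D ε * D ε) U.transpose]
      _ = U * U.transpose := by rw [hDD, Matrix.mul_one]
      _ = 1 := hUo'
  · rw [hKdecomp, hdiag, Finset.mul_sum, Finset.sum_mul]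
    apply Finset.sum_congr rfl
    intro ε _
    rw [Matrix.mul_smul, Matrix.smul_mul]

section Prob
variable {Ω : Type*} [mΩ : MeasurableSpace Ω] (P : Measure Ω) [IsProbabilityMeasure P]
variable (Z : Ω → Euc q)

lemma integrable_growth (hZm : Measurable Z) (hZint : Integrable Z P)
    (φ : Euc d → ℝ) (hcont : Continuous φ) (C : ℝ) (hgrow : ∀ x, |φ x| ≤ C * (1 + ‖x‖))
    (M : Matrix (Fin d) (Fin q) ℝ) :
    Integrable (fun ω => φ (matVec M (Z ω))) P := by
  have hC0 : 0 ≤ C := by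
    have := hgrow 0
    simp only [norm_zero, add_zero, mul_one] at this
    exact le_trans (abs_nonneg _) this
  have haesm : AEStronglyMeasurable (fun ω => φ (matVec M (Z ω))) P :=
    ((hcont.comp (matVec_cont M)).measurable.comp hZm).aestronglyMeasurable
  have hgint : Integrable (fun ω => C * (1 + ‖matVecL M‖ * ‖Z ω‖)) P :=
    (((integrable_const 1).add (hZint.norm.const_mul ‖matVecL M‖)).const_mul C)
  refine hgint.mono' haesm (Filter.Eventually.of_forall fun ω => ?_)
  rw [Real.norm_eq_abs]
  refine le_trans (hgrow _) ?_
  have h1 : ‖matVec M (Z ω)‖ ≤ ‖matVecL M‖ * ‖Z ω‖ := matVec_norm_le M (Z ω)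
  nlinarith [norm_nonneg (Z ω), norm_nonneg (matVecL M)]

lemma radial_shift (hZm : Measurable Z)
    (hradial : ∀ O : Matrix (Fin q) (Fin q) ℝ, O * O.transpose = 1 →
      P.map (fun ω => matVec O (Z ω)) = P.map Z)
    (O : Matrix (Fin q) (Fin q) ℝ) (hO : O * O.transpose = 1)
    (ψ : Euc q → ℝ) (hψ : Continuous ψ) :
    ∫ ω, ψ (matVec O (Z ω)) ∂P = ∫ ω, ψ (Z ω) ∂P := by
  have hm1 : AEMeasurable (fun ω => matVec O (Z ω)) P :=
    ((matVec_cont O).measurable.comp hZm).aemeasurable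
  have h1 : ∫ ω, ψ (matVec O (Z ω)) ∂P = ∫ y, ψ y ∂(P.map (fun ω => matVec O (Z ω))) := by
    rw [integral_map hm1 hψ.aestronglyMeasurable]
  rw [h1, hradial O hO, integral_map hZm.aemeasurable hψ.aestronglyMeasurable]

end Prob


theorem stmt14_part1 {Ω : Type*} [mΩ : MeasurableSpace Ω] (P : Measure Ω) [IsProbabilityMeasure P]
    (d q : ℕ) (Z : Ω → Euc q)
    (hZm : Measurable Z) (hZint : Integrable Z P)
    (hradial : ∀ O : Matrix (Fin q) (Fin q) ℝ, O * O.transpose = 1 →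
      P.map (fun ω => matVec O (Z ω)) = P.map Z)
    (A B : Matrix (Fin d) (Fin q) ℝ)
    (hpsd : Matrix.PosSemidef (B * B.transpose - A * A.transpose)) :
    cvxLE P (fun ω => matVec A (Z ω)) (fun ω => matVec B (Z ω)) := by
  rintro φ hφcvx ⟨C, hC⟩
  obtain ⟨K, hAK, hKc⟩ := douglas A B hpsd
  obtain ⟨w, O, hw0, hwsum, hOorth, hKsum⟩ := contraction_decomp K hKc
  have hφcont : Continuous φ := hφcvx.locallyLipschitz.continuous
  have hint : ∀ M : Matrix (Fin d) (Fin q) ℝ,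
      Integrable (fun ω => φ (matVec M (Z ω))) P :=
    fun M => integrable_growth P Z hZm hZint φ hφcont C hC M
  have hpt : ∀ z : Euc q, φ (matVec A z) ≤ ∑ ε, w ε * φ (matVec (B * O ε) z) := by
    intro z
    have h1 : matVec A z = ∑ ε, w ε • matVec (B * O ε) z := by
      rw [hAK, hKsum]
      have h2 : B * ∑ ε, w ε • O ε = ∑ ε, w ε • (B * O ε) := by
        rw [Matrix.mul_sum]
        exact Finset.sum_congr rfl fun ε _ => Matrix.mul_smul B (w ε) (O ε)
      rw [h2, matVec_sum]
      exact Finset.sum_congr rfl fun ε _ => matVec_smul (w ε) (B * O ε) z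
    rw [h1]
    exact hφcvx.map_sum_le (fun ε _ => hw0 ε) hwsum (fun ε _ => trivial)
  calc ∫ ω, φ (matVec A (Z ω)) ∂P
      ≤ ∫ ω, ∑ ε, w ε * φ (matVec (B * O ε) (Z ω)) ∂P := by
        refine integral_mono (hint A) ?_ (fun ω => hpt (Z ω))
        exact integrable_finset_sum _ (fun ε _ => (hint (B * O ε)).const_mul (w ε))
    _ = ∑ ε, w ε * ∫ ω, φ (matVec (B * O ε) (Z ω)) ∂P := by
        rw [integral_finset_sum _ (fun ε _ => (hint (B * O ε)).const_mul (w ε))]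
        exact Finset.sum_congr rfl fun ε _ => integral_const_mul _ _
    _ = ∑ ε, w ε * ∫ ω, φ (matVec B (Z ω)) ∂P := by
        refine Finset.sum_congr rfl fun ε _ => ?_
        congr 1
        have heq : ∀ ω, φ (matVec (B * O ε) (Z ω))
            = (fun y => φ (matVec B y)) (matVec (O ε) (Z ω)) := by
          intro ω; exact congrArg φ (matVec_matVec B (O ε) (Z ω)).symm
        simp_rw [heq]
        exact radial_shift P Z hZm hradial (O ε) (hOorth ε) _
          (hφcont.comp (matVec_cont B))
    _ = ∫ ω, φ (matVec B (Z ω)) ∂P := by rw [← Finset.sum_mul, hwsum, one_mul]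

theorem stmt14_part2 {Ω : Type*} [mΩ : MeasurableSpace Ω] (P : Measure Ω) [IsProbabilityMeasure P]
    (d q : ℕ) (Z : Ω → Euc q)
    (hZm : Measurable Z) (hZint : Integrable Z P)
    (hradial : ∀ O : Matrix (Fin q) (Fin q) ℝ, O * O.transpose = 1 →
      P.map (fun ω => matVec O (Z ω)) = P.map Z)
    (A B : Matrix (Fin d) (Fin q) ℝ)
    (hZ2 : Integrable (fun ω => ‖Z ω‖ ^ 2) P) (hpos : 0 < ∫ ω, ‖Z ω‖ ^ 2 ∂P)
    (hcvx : cvxLE P (fun ω => matVec A (Z ω)) (fun ω => matVec B (Z ω))) :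
    Matrix.PosSemidef (B * B.transpose - A * A.transpose) := by
  classical
  -- radial_shift inline
  have radial_shift : ∀ (O : Matrix (Fin q) (Fin q) ℝ), O * O.transpose = 1 →
      ∀ (ψ : Euc q → ℝ), Continuous ψ →
      ∫ ω, ψ (matVec O (Z ω)) ∂P = ∫ ω, ψ (Z ω) ∂P := by
    intro O hO ψ hψ
    have hm1 : AEMeasurable (fun ω => matVec O (Z ω)) P :=
      ((matVec_cont O).measurable.comp hZm).aemeasurable
    rw [show (fun ω => ψ (matVec O (Z ω))) = fun ω => ψ ((fun ω => matVec O (Z ω)) ω) from rfl]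
    rw [← integral_map hm1 hψ.aestronglyMeasurable, hradial O hO,
      integral_map hZm.aemeasurable hψ.aestronglyMeasurable]
  -- q = 0 is impossible
  rcases Nat.eq_zero_or_pos q with hq | hq
  · exfalso
    subst hq
    have hz : ∀ ω, ‖Z ω‖ ^ 2 = (0 : ℝ) := by
      intro ω
      have : Z ω = 0 := Subsingleton.elim _ _
      rw [this, norm_zero]; ring
    rw [integral_congr_ae (Filter.Eventually.of_forall hz)] at hpos
    simp at hpos
  set i0 : Fin q := ⟨0, hq⟩ with hi0
  set e0 : Euc q := EuclideanSpace.single i0 (1:ℝ) with he0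
  set c : ℝ := ∫ ω, |⟪e0, Z ω⟫| ∂P with hc
  have hinner_cont : ∀ u : Euc q, Continuous (fun y : Euc q => |⟪u, y⟫|) :=
    fun u => (continuous_const.inner continuous_id).abs
  have hinner_int : ∀ u : Euc q, Integrable (fun ω => |⟪u, Z ω⟫|) P := by
    intro u
    refine Integrable.mono' (hZint.norm.const_mul ‖u‖)
      (((hinner_cont u).measurable.comp hZm).aestronglyMeasurable)
      (Filter.Eventually.of_forall fun ω => ?_)
    rw [Real.norm_eq_abs, abs_abs]
    exact abs_real_inner_le_norm u (Z ω)
  have hIu : ∀ u : Euc q, ∫ ω, |⟪u, Z ω⟫| ∂P = ‖u‖ * c := by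
    intro u
    by_cases hu : u = 0
    · subst hu
      simp only [inner_zero_left, abs_zero, norm_zero, zero_mul, integral_zero]
    · have hnu : ‖u‖ ≠ 0 := norm_ne_zero_iff.mpr hu
      set unit : Euc q := ‖u‖⁻¹ • u with hunit
      have hunitnorm : ‖unit‖ = 1 := by
        rw [hunit, norm_smul, norm_inv, norm_norm, inv_mul_cancel₀ hnu]
      have horth : Orthonormal ℝ (({i0} : Set (Fin q)).restrict (fun _ => unit)) := by
        rw [orthonormal_iff_ite]
        rintro ⟨i, hi⟩ ⟨j, hj⟩
        simp only [Set.mem_singleton_iff] at hi hj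
        have hij : (⟨i, hi⟩ : ({i0} : Set (Fin q))) = ⟨j, hj⟩ := by
          apply Subtype.ext; simp only; rw [hi, hj]
        rw [if_pos hij]
        show ⟪unit, unit⟫ = 1
        rw [real_inner_self_eq_norm_sq, hunitnorm]; ring
      have hcard : Module.finrank ℝ (Euc q) = Fintype.card (Fin q) := by
        simp [finrank_euclideanSpace]
      obtain ⟨b, hb⟩ := horth.exists_orthonormalBasis_extension_of_card_eq hcard
      have hbi0 : b i0 = unit := hb i0 rfl
      set Ou : Matrix (Fin q) (Fin q) ℝ := Matrix.of fun i j => b j i with hOu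
      have hOo : Ou.transpose * Ou = 1 := colMatrix_orth b
      have hOo2 : Ou.transpose * (Ou.transpose).transpose = 1 := by
        rw [Matrix.transpose_transpose]; exact hOo
      have hkey : ∀ z : Euc q, |⟪u, z⟫| = ‖u‖ * |⟪e0, matVec Ou.transpose z⟫| := by
        intro z
        have h1 : ⟪e0, (matVec Ou.transpose z : Euc q)⟫ = (matVec Ou.transpose z : Euc q) i0 := by
          rw [he0, EuclideanSpace.inner_single_left]
          simp
        have h2 : (matVec Ou.transpose z : Euc q) i0 = ⟪unit, z⟫ := by
          rw [matVec_eq, real_inner_eq_dot]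
          show ∑ k, Ou.transpose i0 k * z k = _
          rw [← hbi0]
          rfl
        have h3 : ⟪unit, z⟫ = ‖u‖⁻¹ * ⟪u, z⟫ := by
          rw [hunit, real_inner_smul_left]
        rw [h1, h2, h3, abs_mul, abs_inv, abs_norm]
        field_simp
      calc ∫ ω, |⟪u, Z ω⟫| ∂P = ∫ ω, ‖u‖ * |⟪e0, matVec Ou.transpose (Z ω)⟫| ∂P := by
            exact integral_congr_ae (Filter.Eventually.of_forall fun ω => hkey (Z ω))
        _ = ‖u‖ * ∫ ω, |⟪e0, matVec Ou.transpose (Z ω)⟫| ∂P := integral_const_mul _ _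
        _ = ‖u‖ * ∫ ω, |⟪e0, Z ω⟫| ∂P := by
            rw [radial_shift Ou.transpose hOo2 (fun y => |⟪e0, y⟫|) (hinner_cont e0)]
        _ = ‖u‖ * c := rfl
  -- positivity of c
  have hc0 : 0 ≤ c := integral_nonneg fun ω => abs_nonneg _
  have hcpos : 0 < c := by
    rcases lt_or_eq_of_le hc0 with h | h
    · exact h
    · exfalso
      have hzero : ∀ u : Euc q, ∫ ω, |⟪u, Z ω⟫| ∂P = 0 := by
        intro u; rw [hIu u, ← h, mul_zero]
      have hae : ∀ j : Fin q, ∀ᵐ ω ∂P, |⟪(EuclideanSpace.single j (1:ℝ) : Euc q), Z ω⟫| = 0 := by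
        intro j
        have := (integral_eq_zero_iff_of_nonneg (fun ω => abs_nonneg _)
          (hinner_int (EuclideanSpace.single j (1:ℝ)))).mp (hzero _)
        filter_upwards [this] with ω hω
        exact hω
      have hall : ∀ᵐ ω ∂P, ∀ j : Fin q, |⟪(EuclideanSpace.single j (1:ℝ) : Euc q), Z ω⟫| = 0 :=
        (MeasureTheory.ae_all_iff).mpr hae
      have hZ0 : ∀ᵐ ω ∂P, ‖Z ω‖ ^ 2 = 0 := by
        filter_upwards [hall] with ω hω
        have hcoord : ∀ j, Z ω j = 0 := by
          intro j
          have := hω j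
          rw [EuclideanSpace.inner_single_left] at this
          simpa using this
        have : Z ω = 0 := by
          ext j; exact hcoord j
        rw [this, norm_zero]; ring
      rw [integral_congr_ae hZ0] at hpos
      simp at hpos
  -- main inequality
  have hmain : ∀ vv : Euc d, ‖(matVec A.transpose vv : Euc q)‖ ≤ ‖(matVec B.transpose vv : Euc q)‖ := by
    intro vv
    have hconv : ConvexOn ℝ Set.univ (fun x : Euc d => |⟪vv, x⟫|) := by
      refine ⟨convex_univ, ?_⟩
      intro x _ y _ a b ha hb hab
      simp only [smul_eq_mul]
      calc |⟪vv, a • x + b • y⟫| = |a * ⟪vv, x⟫ + b * ⟪vv, y⟫| := by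
            rw [inner_add_right, real_inner_smul_right, real_inner_smul_right]
        _ ≤ |a * ⟪vv, x⟫| + |b * ⟪vv, y⟫| := abs_add_le _ _
        _ = a * |⟪vv, x⟫| + b * |⟪vv, y⟫| := by
            rw [abs_mul, abs_mul, abs_of_nonneg ha, abs_of_nonneg hb]
    have hgrow : ∃ C : ℝ, ∀ x : Euc d, |(fun x : Euc d => |⟪vv, x⟫|) x| ≤ C * (1 + ‖x‖) := by
      refine ⟨‖vv‖, fun x => ?_⟩
      rw [abs_abs]
      calc |⟪vv, x⟫| ≤ ‖vv‖ * ‖x‖ := abs_real_inner_le_norm vv x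
        _ ≤ ‖vv‖ * (1 + ‖x‖) := by nlinarith [norm_nonneg vv, norm_nonneg x]
    have h1 := hcvx (fun x : Euc d => |⟪vv, x⟫|) hconv hgrow
    simp only at h1
    have h2 : ∀ M : Matrix (Fin d) (Fin q) ℝ, ∀ ω,
        |⟪vv, (matVec M (Z ω) : Euc d)⟫| = |⟪(matVec M.transpose vv : Euc q), Z ω⟫| := by
      intro M ω; rw [inner_matVec]
    have hA' : ∫ ω, |⟪vv, (matVec A (Z ω) : Euc d)⟫| ∂P
        = ‖(matVec A.transpose vv : Euc q)‖ * c := by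
      rw [integral_congr_ae (Filter.Eventually.of_forall fun ω => h2 A ω), hIu]
    have hB' : ∫ ω, |⟪vv, (matVec B (Z ω) : Euc d)⟫| ∂P
        = ‖(matVec B.transpose vv : Euc q)‖ * c := by
      rw [integral_congr_ae (Filter.Eventually.of_forall fun ω => h2 B ω), hIu]
    have h3 : ‖(matVec A.transpose vv : Euc q)‖ * c ≤ ‖(matVec B.transpose vv : Euc q)‖ * c := by
      rw [← hA', ← hB']; exact h1
    exact le_of_mul_le_mul_right h3 hcpos
  -- conclude PosSemidef
  rw [Matrix.posSemidef_iff_dotProduct_mulVec]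
  constructor
  · show (B * B.transpose - A * A.transpose).conjTranspose = _
    ext i j
    simp only [Matrix.conjTranspose_apply, Matrix.sub_apply, Matrix.mul_apply,
      Matrix.transpose_apply, star_trivial]
    rw [Finset.sum_congr rfl (fun k _ => mul_comm (B j k) (B i k)),
      Finset.sum_congr rfl (fun k _ => mul_comm (A j k) (A i k))]
  · intro x
    have hx := hmain (WithLp.toLp 2 x : Euc d)
    have hnn : (0:ℝ) ≤ ‖(matVec B.transpose (WithLp.toLp 2 x : Euc d) : Euc q)‖ ^ 2
        - ‖(matVec A.transpose (WithLp.toLp 2 x : Euc d) : Euc q)‖ ^ 2 := by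
      nlinarith [norm_nonneg (matVec A.transpose (WithLp.toLp 2 x : Euc d)),
        norm_nonneg (matVec B.transpose (WithLp.toLp 2 x : Euc d))]
    have hsx : star x = x := by
      funext i; exact star_trivial _
    rw [hsx, Matrix.sub_mulVec, dotProduct_sub, dot_MMt, dot_MMt]
    exact hnn

/-- Let `Z` be an integrable `ℝ^q`-valued random vector with a radial
distribution. If `AA* ≤ BB*` in the Loewner order then `AZ ≤_cvx BZ`; conversely, if
moreover `0 < E|Z|² < ∞`, then `AZ ≤_cvx BZ` implies `AA* ≤ BB*`. -/
theorem stmt14 {Ω : Type*} [mΩ : MeasurableSpace Ω] (P : Measure Ω) [IsProbabilityMeasure P]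
    (d q : ℕ) (Z : Ω → Euc q)
    (hZm : Measurable Z) (hZint : Integrable Z P)
    (hradial : ∀ O : Matrix (Fin q) (Fin q) ℝ, O * O.transpose = 1 →
      P.map (fun ω => matVec O (Z ω)) = P.map Z)
    (A B : Matrix (Fin d) (Fin q) ℝ) :
    (Matrix.PosSemidef (B * B.transpose - A * A.transpose) →
      cvxLE P (fun ω => matVec A (Z ω)) (fun ω => matVec B (Z ω)))
    ∧ (Integrable (fun ω => ‖Z ω‖ ^ 2) P → 0 < ∫ ω, ‖Z ω‖ ^ 2 ∂P →
        cvxLE P (fun ω => matVec A (Z ω)) (fun ω => matVec B (Z ω)) →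
        Matrix.PosSemidef (B * B.transpose - A * A.transpose)) := by
  constructor
  · intro hpsd
    exact stmt14_part1 P d q Z hZm hZint hradial A B hpsd
  · intro hZ2 hpos hcvx
    exact stmt14_part2 P d q Z hZm hZint hradial A B hZ2 hpos hcvx

end
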